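/- Let α = 4λ/G + 2 with λ ≥ 0, G > 0, C > 0, and let V_α(t,S) = C√(αt)·[2∫₀^{S/√(4αt)}(∫₀^u exp(x²)dx)du - 1]. Consider the algorithm predicting x_t = (1/2)[V_α(t,S_{t-1}+1) - V_α(t,S_{t-1}-1)] with S_t = S_{t-1} - g_t/G, S_0 = 0, |g_t| ≤ G. Then for all T ≥ 1, t-wise, |x_t - x_{t+1}| ≤ (1/2)[V_α(t,S_{t-1}+2) + V_α(t,S_{t-1}-2) - 2V_α(t,S_{t-1})]. -/

import Mathlib

open intervalIntegral MeasureTheory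

/-- The switching-adjusted potential
`V_α(t,S) = C √(αt) [2 ∫₀^{S/√(4αt)} (∫₀^u exp(x²) dx) du - 1]`. -/
noncomputable def Vpot (C α t S : ℝ) : ℝ :=
  C * Real.sqrt (α * t) *
    (2 * (∫ u in (0:ℝ)..(S / Real.sqrt (4 * α * t)),
        ∫ x in (0:ℝ)..u, Real.exp (x ^ 2)) - 1)


noncomputable def Ff (u : ℝ) : ℝ := ∫ x in (0:ℝ)..u, Real.exp (x ^ 2)

lemma contExp : Continuous fun x : ℝ => Real.exp (x ^ 2) := by continuity

lemma intExp (a b : ℝ) :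
    IntervalIntegrable (fun x : ℝ => Real.exp (x ^ 2)) volume a b :=
  contExp.intervalIntegrable a b

lemma Ff_cont : Continuous Ff :=
  intervalIntegral.continuous_primitive (fun a b => intExp a b) 0

lemma Ff_sub (p q : ℝ) : Ff q - Ff p = ∫ x in p..q, Real.exp (x ^ 2) :=
  integral_interval_sub_left (intExp 0 q) (intExp 0 p)

lemma Ff_mono : Monotone Ff := by
  intro p q h
  have h1 : 0 ≤ ∫ x in p..q, Real.exp (x ^ 2) :=
    intervalIntegral.integral_nonneg h (fun u _ => (Real.exp_pos _).le)
  have h2 := Ff_sub p q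
  linarith

lemma Ff_neg (u : ℝ) : Ff (-u) = -Ff u := by
  have h := intervalIntegral.integral_comp_neg (a := (0:ℝ)) (b := -u)
      (f := fun x => Real.exp (x ^ 2))
  simp only [neg_neg, neg_zero, neg_sq] at h
  unfold Ff
  rw [h, intervalIntegral.integral_symm]

/-- Upper bound: difference of `Ff` at two nonpositive points by constant bound. -/
lemma Ff_sub_le (p q c : ℝ) (hpq : p ≤ q) (hc : ∀ x ∈ Set.Icc p q, Real.exp (x ^ 2) ≤ c) :
    Ff q - Ff p ≤ (q - p) * c := by
  rw [Ff_sub]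
  have h := intervalIntegral.integral_mono_on (μ := volume) hpq (intExp p q)
      (_root_.intervalIntegrable_const (c := c)) hc
  simpa [smul_eq_mul] using h

lemma Ff_sub_ge (p q c : ℝ) (hpq : p ≤ q) (hc : ∀ x ∈ Set.Icc p q, c ≤ Real.exp (x ^ 2)) :
    (q - p) * c ≤ Ff q - Ff p := by
  rw [Ff_sub]
  have h := intervalIntegral.integral_mono_on (μ := volume) hpq
      (_root_.intervalIntegrable_const (c := c)) (intExp p q) hc
  simpa [smul_eq_mul] using h

/-- `D(v) ≤ (-v)(b'-b)/(bb') e^{(v/b)^2}` for `v ≤ 0`. -/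
lemma D_le (b b' v : ℝ) (hb : 0 < b) (hbb : b ≤ b') (hv : v ≤ 0) :
    Ff (v / b') - Ff (v / b) ≤ (-v) * (b' - b) / (b * b') * Real.exp ((v / b) ^ 2) := by
  have hb' : 0 < b' := hb.trans_le hbb
  have h1 : v / b ≤ v / b' := by
    rw [div_le_div_iff₀ hb hb']
    nlinarith
  have h2 : v / b' ≤ 0 := div_nonpos_of_nonpos_of_nonneg hv hb'.le
  have key : ∀ x ∈ Set.Icc (v / b) (v / b'), Real.exp (x ^ 2) ≤ Real.exp ((v / b) ^ 2) := by
    intro x hx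
    have hx1 := hx.1
    have hx2 : x ≤ 0 := hx.2.trans h2
    exact Real.exp_le_exp.mpr (by nlinarith)
  have h := Ff_sub_le (v / b) (v / b') _ h1 key
  have heq : (v / b' - v / b) = (-v) * (b' - b) / (b * b') := by
    field_simp
    ring
  rw [heq] at h
  exact h

/-- `E(v) ≥ (2/b) e^{(v/b)^2}` for `v ≤ 0`. -/
lemma E_ge (b v : ℝ) (hb : 0 < b) (hv : v ≤ 0) :
    2 / b * Real.exp ((v / b) ^ 2) ≤ Ff (v / b) - Ff ((v - 2) / b) := by
  have h1 : (v - 2) / b ≤ v / b := by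
    apply div_le_div_of_nonneg_right (by linarith) hb.le
  have h2 : v / b ≤ 0 := div_nonpos_of_nonpos_of_nonneg hv hb.le
  have key : ∀ x ∈ Set.Icc ((v - 2) / b) (v / b), Real.exp ((v / b) ^ 2) ≤ Real.exp (x ^ 2) := by
    intro x hx
    have hx2 := hx.2
    exact Real.exp_le_exp.mpr (by nlinarith)
  have h := Ff_sub_ge ((v - 2) / b) (v / b) _ h1 key
  have heq : (v / b - (v - 2) / b) = 2 / b := by
    field_simp
    ring
  rw [heq] at h
  exact h
lemma D_nonpos (b b' v : ℝ) (hb : 0 < b) (hbb : b ≤ b') (hv : 0 ≤ v) :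
    Ff (v / b') - Ff (v / b) ≤ 0 := by
  have hb' : 0 < b' := hb.trans_le hbb
  have h : v / b' ≤ v / b := by
    rw [div_le_div_iff₀ hb' hb]
    nlinarith
  simpa using sub_nonpos.mpr (Ff_mono h)

lemma E_nonneg (b v : ℝ) (hb : 0 < b) : 0 ≤ Ff (v / b) - Ff ((v - 2) / b) := by
  have h : (v - 2) / b ≤ v / b := by
    apply div_le_div_of_nonneg_right (by linarith) hb.le
  simpa using sub_nonneg.mpr (Ff_mono h)

/-- Pointwise key inequality `D(v) + D(v+1) ≤ E(v)`. -/
lemma pointwise (b b' v : ℝ) (hb : 0 < b) (hbb : b ≤ b')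
    (hneg : v ≤ -1 → (-v) * (b' - b) ≤ b') :
    (Ff (v / b') - Ff (v / b)) + (Ff ((v + 1) / b') - Ff ((v + 1) / b)) ≤
      Ff (v / b) - Ff ((v - 2) / b) := by
  have hb' : 0 < b' := hb.trans_le hbb
  have hE0 := E_nonneg b v hb
  rcases le_or_gt 0 v with h0 | h0
  · have d1 := D_nonpos b b' v hb hbb h0
    have d2 := D_nonpos b b' (v + 1) hb hbb (by linarith)
    linarith
  · have e := E_ge b v hb h0.le
    have d1 := D_le b b' v hb hbb h0.le
    have hexpos : (0:ℝ) < Real.exp ((v / b) ^ 2) := Real.exp_pos _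
    rcases le_or_gt v (-1) with h1 | h1
    · -- v ≤ -1
      have d2 := D_le b b' (v + 1) hb hbb (by linarith)
      have hexp : Real.exp (((v + 1) / b) ^ 2) ≤ Real.exp ((v / b) ^ 2) := by
        apply Real.exp_le_exp.mpr
        rw [div_pow, div_pow]
        apply div_le_div_of_nonneg_right (by nlinarith) (by positivity)
      have hc2 : 0 ≤ (-(v + 1)) * (b' - b) / (b * b') := by
        apply div_nonneg (by nlinarith) (by positivity)
      have d2' : Ff ((v + 1) / b') - Ff ((v + 1) / b) ≤
          (-(v + 1)) * (b' - b) / (b * b') * Real.exp ((v / b) ^ 2) := by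
        calc Ff ((v + 1) / b') - Ff ((v + 1) / b)
            ≤ (-(v + 1)) * (b' - b) / (b * b') * Real.exp (((v + 1) / b) ^ 2) := d2
          _ ≤ (-(v + 1)) * (b' - b) / (b * b') * Real.exp ((v / b) ^ 2) :=
              mul_le_mul_of_nonneg_left hexp hc2
      -- coefficient bound: ((-v) + (-(v+1))) * (b'-b)/(b*b') ≤ 2/b
      have hco : (-v) * (b' - b) / (b * b') + (-(v + 1)) * (b' - b) / (b * b') ≤ 2 / b := by
        rw [← add_div, div_le_div_iff₀ (by positivity) hb]
        have hn := hneg h1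
        nlinarith
      have : (-v) * (b' - b) / (b * b') * Real.exp ((v / b) ^ 2)
          + (-(v + 1)) * (b' - b) / (b * b') * Real.exp ((v / b) ^ 2)
          ≤ 2 / b * Real.exp ((v / b) ^ 2) := by
        rw [← add_mul]
        exact mul_le_mul_of_nonneg_right hco hexpos.le
      linarith
    · -- -1 < v < 0
      have d2 := D_nonpos b b' (v + 1) hb hbb (by linarith)
      have hco : (-v) * (b' - b) / (b * b') ≤ 2 / b := by
        rw [div_le_div_iff₀ (by positivity) hb]
        nlinarith [mul_nonneg (mul_nonneg (by linarith : (0:ℝ) ≤ 1 + v)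
            (by linarith : (0:ℝ) ≤ b' - b)) hb.le,
          mul_nonneg hb.le hb'.le, sq_nonneg b]
      have : (-v) * (b' - b) / (b * b') * Real.exp ((v / b) ^ 2)
          ≤ 2 / b * Real.exp ((v / b) ^ 2) :=
        mul_le_mul_of_nonneg_right hco hexpos.le
      linarith
noncomputable def Jf (b p q : ℝ) : ℝ := ∫ v in p..q, Ff (v / b)

lemma contJ (b : ℝ) : Continuous fun v : ℝ => Ff (v / b) :=
  Ff_cont.comp (continuous_id.div_const b)

lemma intJ (b p q : ℝ) : IntervalIntegrable (fun v : ℝ => Ff (v / b)) volume p q :=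
  (contJ b).intervalIntegrable p q

lemma intJshift (b d p q : ℝ) :
    IntervalIntegrable (fun v : ℝ => Ff ((v + d) / b)) volume p q :=
  (Ff_cont.comp ((continuous_id.add continuous_const).div_const b)).intervalIntegrable p q

/-- Shifting the integration interval. -/
lemma Jf_shift (b p q d : ℝ) :
    Jf b (p + d) (q + d) = ∫ v in p..q, Ff ((v + d) / b) :=
  (intervalIntegral.integral_comp_add_right (fun v => Ff (v / b)) d).symm

lemma Jf_shift_le (b p q d : ℝ) (hb : 0 < b) (hpq : p ≤ q) (hd : d ≤ 0) :
    Jf b (p + d) (q + d) ≤ Jf b p q := by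
  rw [Jf_shift]
  apply intervalIntegral.integral_mono_on hpq (intJshift b d p q) (intJ b p q)
  intro x _
  apply Ff_mono
  apply div_le_div_of_nonneg_right (by linarith) hb.le

lemma Jf_shift_ge (b p q d : ℝ) (hb : 0 < b) (hpq : p ≤ q) (hd : 0 ≤ d) :
    Jf b p q ≤ Jf b (p + d) (q + d) := by
  rw [Jf_shift]
  apply intervalIntegral.integral_mono_on hpq (intJ b p q) (intJshift b d p q)
  intro x _
  apply Ff_mono
  apply div_le_div_of_nonneg_right (by linarith) hb.le

/-- Oddness of `Jf` under reflection. -/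
lemma Jf_neg (b p q : ℝ) : Jf b (-q) (-p) = -Jf b p q := by
  have h := intervalIntegral.integral_comp_neg (a := p) (b := q) (fun v => Ff (v / b))
  unfold Jf
  rw [← h]
  rw [show (fun x => Ff (-x / b)) = fun x => -Ff (x / b) by
    funext x; rw [neg_div, Ff_neg]]
  exact intervalIntegral.integral_neg
/-- The key time-step inequality for the discrete gradient. -/
lemma keyU (b b' s : ℝ) (hb : 0 < b) (hbb : b ≤ b')
    (hbound : ∀ v, s ≤ v → v ≤ -1 → (-v) * (b' - b) ≤ b') :
    Jf b' s (s + 2) ≤ Jf b s (s + 2) + Jf b (s - 1) (s + 1) - Jf b (s - 2) s := by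
  have hb' : 0 < b' := hb.trans_le hbb
  -- split [s, s+2] = [s, s+1] ∪ [s+1, s+2] and shift the second piece
  have hsplit : ∀ c : ℝ, 0 < c →
      Jf c s (s + 2) = ∫ v in s..s + 1, (Ff (v / c) + Ff ((v + 1) / c)) := by
    intro c hc
    have h1 : Jf c s (s + 1) + Jf c (s + 1) (s + 2) = Jf c s (s + 2) :=
      intervalIntegral.integral_add_adjacent_intervals (intJ c s (s + 1)) (intJ c (s + 1) (s + 2))
    have h2 : (∫ v in s..s + 1, Ff ((v + 1) / c)) = Jf c (s + 1) (s + 2) := by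
      unfold Jf
      rw [intervalIntegral.integral_comp_add_right (fun v => Ff (v / c)) 1,
        show s + 1 + 1 = s + 2 by ring]
    rw [intervalIntegral.integral_add (intJ c s (s + 1)) (intJshift c 1 s (s + 1)), h2]
    unfold Jf at h1 ⊢
    linarith
  -- the E-side
  have hE : Jf b (s - 1) (s + 1) - Jf b (s - 2) s
      = ∫ v in s..s + 1, (Ff (v / b) - Ff ((v - 2) / b)) := by
    have h1 : Jf b (s - 1) s + Jf b s (s + 1) = Jf b (s - 1) (s + 1) :=
      intervalIntegral.integral_add_adjacent_intervals (intJ b (s - 1) s) (intJ b s (s + 1))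
    have h2 : Jf b (s - 2) (s - 1) + Jf b (s - 1) s = Jf b (s - 2) s :=
      intervalIntegral.integral_add_adjacent_intervals (intJ b (s - 2) (s - 1)) (intJ b (s - 1) s)
    have h3 : (∫ v in s..s + 1, Ff ((v - 2) / b)) = Jf b (s - 2) (s - 1) := by
      unfold Jf
      rw [intervalIntegral.integral_comp_sub_right (fun v => Ff (v / b)) 2,
        show s + 1 - 2 = s - 1 by ring]
    have hsub : IntervalIntegrable (fun v : ℝ => Ff ((v - 2) / b)) volume s (s + 1) :=
      (Ff_cont.comp ((continuous_id.sub continuous_const).div_const b)).intervalIntegrable _ _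
    rw [intervalIntegral.integral_sub (intJ b s (s + 1)) hsub, h3]
    unfold Jf at h1 h2 ⊢
    linarith
  have hmono := intervalIntegral.integral_mono_on (μ := volume)
    (a := s) (b := s + 1)
    (f := fun v => Ff (v / b') + Ff ((v + 1) / b'))
    (g := fun v => (Ff (v / b) + Ff ((v + 1) / b)) + (Ff (v / b) - Ff ((v - 2) / b)))
    (by linarith)
    ((intJ b' s (s + 1)).add (intJshift b' 1 s (s + 1)))
    (((intJ b s (s + 1)).add (intJshift b 1 s (s + 1))).add
      (((intJ b s (s + 1)).sub
        ((Ff_cont.comp ((continuous_id.sub continuous_const).div_const b)).intervalIntegrable _ _))))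
    (by
      intro v hv
      have hp := pointwise b b' v hb hbb (fun h1 => hbound v hv.1 h1)
      linarith)
  have hadd : (∫ v in s..s + 1,
        ((Ff (v / b) + Ff ((v + 1) / b)) + (Ff (v / b) - Ff ((v - 2) / b))))
      = (∫ v in s..s + 1, (Ff (v / b) + Ff ((v + 1) / b)))
        + ∫ v in s..s + 1, (Ff (v / b) - Ff ((v - 2) / b)) := by
    apply intervalIntegral.integral_add
      ((intJ b s (s + 1)).add (intJshift b 1 s (s + 1)))
      ((intJ b s (s + 1)).sub
        ((Ff_cont.comp ((continuous_id.sub continuous_const).div_const b)).intervalIntegrable _ _))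
  rw [hadd] at hmono
  linarith [hsplit b hb, hsplit b' hb']
/-- Difference of potentials as a `Jf` integral. -/
lemma Vpot_sub_eq (C α t p q : ℝ) (hat : 0 < α * t) :
    Vpot C α t p - Vpot C α t q = C * Jf (2 * Real.sqrt (α * t)) q p := by
  set a := Real.sqrt (α * t) with ha_def
  have ha : 0 < a := Real.sqrt_pos.mpr hat
  have h4 : Real.sqrt (4 * α * t) = 2 * a := by
    rw [show 4 * α * t = 2 ^ 2 * (α * t) by ring, ha_def, Real.sqrt_mul (by positivity),
      Real.sqrt_sq (by norm_num)]
  have hV : ∀ S : ℝ, Vpot C α t S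
      = C * a * (2 * (∫ u in (0:ℝ)..(S / (2 * a)), Ff u) - 1) := by
    intro S
    unfold Vpot Ff
    rw [h4]
  have hPhi : (∫ u in (0:ℝ)..(p / (2 * a)), Ff u) - (∫ u in (0:ℝ)..(q / (2 * a)), Ff u)
      = ∫ u in (q / (2 * a))..(p / (2 * a)), Ff u :=
    intervalIntegral.integral_interval_sub_left (Ff_cont.intervalIntegrable _ _)
      (Ff_cont.intervalIntegrable _ _)
  have hJ : Jf (2 * a) q p = (2 * a) * ∫ y in (q / (2 * a))..(p / (2 * a)), Ff y := by
    unfold Jf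
    rw [intervalIntegral.integral_comp_div (f := Ff) (by positivity : (2:ℝ) * a ≠ 0)]
    rw [smul_eq_mul]
  rw [hV p, hV q, hJ, ← hPhi]
  ring

/-- The numeric inequality `(t+1)(b'-b) ≤ b'`. -/
lemma bnum (α t : ℝ) (hα : 2 ≤ α) (ht : 1 ≤ t) :
    (t + 1) * (2 * Real.sqrt (α * (t + 1)) - 2 * Real.sqrt (α * t))
      ≤ 2 * Real.sqrt (α * (t + 1)) := by
  set a := Real.sqrt (α * t) with ha_def
  set a' := Real.sqrt (α * (t + 1)) with ha'_def
  have hat : 0 < α * t := by nlinarith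
  have hat' : 0 < α * (t + 1) := by nlinarith
  have ha : 0 < a := Real.sqrt_pos.mpr hat
  have ha' : 0 < a' := Real.sqrt_pos.mpr hat'
  have ha2 : a ^ 2 = α * t := Real.sq_sqrt hat.le
  have ha'2 : a' ^ 2 = α * (t + 1) := Real.sq_sqrt hat'.le
  have haa' : a ≤ a' := Real.sqrt_le_sqrt (by nlinarith)
  nlinarith [add_pos ha' ha, mul_pos ha ha']
/-- With `α = 4λ/G + 2` and predictions `x_t = ∇̄_S V_α(t, S_{t-1})`, `S_t = S_{t-1} - g_t/G`,
`|g_t| ≤ G`, the one-step switching satisfies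
`|x_t - x_{t+1}| ≤ (1/2)[V_α(t,S_{t-1}+2) + V_α(t,S_{t-1}-2) - 2 V_α(t,S_{t-1})]`. -/
theorem switching_le_discrete_second_deriv (lam G C α : ℝ)
    (hlam : 0 ≤ lam) (hG : 0 < G) (hC : 0 < C) (hα : α = 4 * lam / G + 2)
    (g S x : ℕ → ℝ) (hg : ∀ t, |g t| ≤ G) (hS0 : S 0 = 0)
    (hS : ∀ t, 1 ≤ t → S t = S (t - 1) - g t / G)
    (hx : ∀ t, 1 ≤ t →
      x t = (Vpot C α (t : ℝ) (S (t - 1) + 1) - Vpot C α (t : ℝ) (S (t - 1) - 1)) / 2) :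
    ∀ t, 1 ≤ t →
      |x t - x (t + 1)| ≤
        (1 / 2) * (Vpot C α (t : ℝ) (S (t - 1) + 2) + Vpot C α (t : ℝ) (S (t - 1) - 2)
          - 2 * Vpot C α (t : ℝ) (S (t - 1))) := by
  have hα2 : 2 ≤ α := by
    rw [hα]
    have : 0 ≤ 4 * lam / G := by positivity
    linarith
  -- bound on the partial sums
  have hSb : ∀ n : ℕ, |S n| ≤ (n : ℝ) := by
    intro n
    induction n with
    | zero => simp [hS0]
    | succ k ih =>
      have hk := hS (k + 1) (by omega)
      simp only [Nat.add_sub_cancel] at hk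
      have hgk : |g (k + 1) / G| ≤ 1 := by
        rw [abs_div, abs_of_pos hG]
        exact div_le_one_of_le₀ (hg (k + 1)) hG.le
      have htri : |S k - g (k + 1) / G| ≤ |S k| + |g (k + 1) / G| := by
        have := abs_add_le (S k) (-(g (k + 1) / G))
        simpa [sub_eq_add_neg, abs_neg] using this
      rw [hk]
      push_cast
      linarith
  intro t ht
  have ht1 : (1 : ℝ) ≤ (t : ℝ) := by exact_mod_cast ht
  have hat : 0 < α * (t : ℝ) := by nlinarith
  have hat' : 0 < α * ((t : ℝ) + 1) := by nlinarith
  set s := S (t - 1) with hs_def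
  set a := Real.sqrt (α * (t : ℝ)) with ha_def
  set a' := Real.sqrt (α * ((t : ℝ) + 1)) with ha'_def
  have ha : 0 < a := Real.sqrt_pos.mpr hat
  have ha' : 0 < a' := Real.sqrt_pos.mpr hat'
  have haa' : a ≤ a' := Real.sqrt_le_sqrt (by nlinarith)
  have hb2a : 0 < 2 * a := by linarith
  have hbb : 2 * a ≤ 2 * a' := by linarith
  have hnum := bnum α t hα2 ht1
  rw [← ha'_def, ← ha_def] at hnum
  have hsb : |s| ≤ (t : ℝ) - 1 := by
    have h := hSb (t - 1)
    rw [← hs_def] at h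
    rwa [Nat.cast_sub ht, Nat.cast_one] at h
  have hsbl := (abs_le.mp hsb).1
  have hsbu := (abs_le.mp hsb).2
  -- the step
  set δ : ℝ := -(g t / G) with hδ_def
  have hSt : S t = s + δ := by rw [hS t ht, ← hs_def, hδ_def]; ring
  have hδabs : |δ| ≤ 1 := by
    rw [hδ_def, abs_neg, abs_div, abs_of_pos hG]
    exact div_le_one_of_le₀ (hg t) hG.le
  have hδ1 := (abs_le.mp hδabs).1
  have hδ2 := (abs_le.mp hδabs).2
  -- expressions for the predictions
  have hxt : x t = C * Jf (2 * a) (s - 1) (s + 1) / 2 := by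
    have h := hx t ht
    rw [← hs_def] at h
    rw [Vpot_sub_eq C α (t : ℝ) (s + 1) (s - 1) hat, ← ha_def] at h
    exact h
  have hxt1 : x (t + 1) = C * Jf (2 * a') (s + δ - 1) (s + δ + 1) / 2 := by
    have h := hx (t + 1) (by omega)
    simp only [Nat.add_sub_cancel] at h
    rw [hSt] at h
    have hcast : ((t + 1 : ℕ) : ℝ) = (t : ℝ) + 1 := by push_cast; ring
    rw [hcast, Vpot_sub_eq C α ((t : ℝ) + 1) (s + δ + 1) (s + δ - 1) hat', ← ha'_def] at h
    exact h
  have hR2 : Vpot C α (t : ℝ) (s + 2) - Vpot C α (t : ℝ) s = C * Jf (2 * a) s (s + 2) := by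
    rw [Vpot_sub_eq C α (t : ℝ) (s + 2) s hat, ← ha_def]
  have hR3 : Vpot C α (t : ℝ) s - Vpot C α (t : ℝ) (s - 2) = C * Jf (2 * a) (s - 2) s := by
    rw [Vpot_sub_eq C α (t : ℝ) s (s - 2) hat, ← ha_def]
  -- key inequalities
  have hbound1 : ∀ v, s ≤ v → v ≤ -1 → (-v) * (2 * a' - 2 * a) ≤ 2 * a' := by
    intro v hv h1
    have h2 : -v ≤ (t : ℝ) + 1 := by linarith
    have hba : 0 ≤ 2 * a' - 2 * a := by linarith
    calc (-v) * (2 * a' - 2 * a) ≤ ((t : ℝ) + 1) * (2 * a' - 2 * a) :=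
          mul_le_mul_of_nonneg_right h2 hba
      _ ≤ 2 * a' := hnum
  have hbound2 : ∀ v, -s ≤ v → v ≤ -1 → (-v) * (2 * a' - 2 * a) ≤ 2 * a' := by
    intro v hv h1
    have h2 : -v ≤ (t : ℝ) + 1 := by linarith
    have hba : 0 ≤ 2 * a' - 2 * a := by linarith
    calc (-v) * (2 * a' - 2 * a) ≤ ((t : ℝ) + 1) * (2 * a' - 2 * a) :=
          mul_le_mul_of_nonneg_right h2 hba
      _ ≤ 2 * a' := hnum
  have hU1 := keyU (2 * a) (2 * a') s hb2a hbb hbound1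
  have hU2' := keyU (2 * a) (2 * a') (-s) hb2a hbb hbound2
  have e1 : Jf (2 * a') (-s) (-s + 2) = -Jf (2 * a') (s - 2) s := by
    rw [show -s + 2 = -(s - 2) by ring]
    exact Jf_neg (2 * a') (s - 2) s
  have e2 : Jf (2 * a) (-s) (-s + 2) = -Jf (2 * a) (s - 2) s := by
    rw [show -s + 2 = -(s - 2) by ring]
    exact Jf_neg (2 * a) (s - 2) s
  have e3 : Jf (2 * a) (-s - 1) (-s + 1) = -Jf (2 * a) (s - 1) (s + 1) := by
    rw [show -s - 1 = -(s + 1) by ring, show -s + 1 = -(s - 1) by ring]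
    exact Jf_neg (2 * a) (s - 1) (s + 1)
  have e4 : Jf (2 * a) (-s - 2) (-s) = -Jf (2 * a) s (s + 2) := by
    rw [show -s - 2 = -(s + 2) by ring]
    exact Jf_neg (2 * a) s (s + 2)
  rw [e1, e2, e3, e4] at hU2'
  -- shift bounds
  have hsh1 : Jf (2 * a') (s + δ - 1) (s + δ + 1) ≤ Jf (2 * a') s (s + 2) := by
    have h := Jf_shift_le (2 * a') s (s + 2) (δ - 1) (by linarith) (by linarith) (by linarith)
    rw [show s + (δ - 1) = s + δ - 1 by ring, show s + 2 + (δ - 1) = s + δ + 1 by ring] at h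
    exact h
  have hsh2 : Jf (2 * a') (s - 2) s ≤ Jf (2 * a') (s + δ - 1) (s + δ + 1) := by
    have h := Jf_shift_ge (2 * a') (s - 2) s (δ + 1) (by linarith) (by linarith) (by linarith)
    rw [show s - 2 + (δ + 1) = s + δ - 1 by ring, show s + (δ + 1) = s + δ + 1 by ring] at h
    exact h
  -- final assembly
  rw [hxt, hxt1]
  have habs : |C * Jf (2 * a) (s - 1) (s + 1) / 2 - C * Jf (2 * a') (s + δ - 1) (s + δ + 1) / 2|
      = C / 2 * |Jf (2 * a) (s - 1) (s + 1) - Jf (2 * a') (s + δ - 1) (s + δ + 1)| := by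
    rw [show C * Jf (2 * a) (s - 1) (s + 1) / 2 - C * Jf (2 * a') (s + δ - 1) (s + δ + 1) / 2
        = C / 2 * (Jf (2 * a) (s - 1) (s + 1) - Jf (2 * a') (s + δ - 1) (s + δ + 1)) by ring,
      abs_mul, abs_of_pos (by positivity : (0 : ℝ) < C / 2)]
  rw [habs]
  have hRHS : (1 / 2) * (Vpot C α (t : ℝ) (s + 2) + Vpot C α (t : ℝ) (s - 2)
        - 2 * Vpot C α (t : ℝ) s)
      = C / 2 * (Jf (2 * a) s (s + 2) - Jf (2 * a) (s - 2) s) := by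
    linear_combination hR2 / 2 - hR3 / 2
  rw [hRHS]
  apply mul_le_mul_of_nonneg_left _ (by positivity : (0 : ℝ) ≤ C / 2)
  rw [abs_le]
  constructor
  · linarith
  · linarith
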